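/- Let 𝒯 be a chain (under inclusion) of nonempty subsets of T, let Ω be finite, and suppose that for all ω, ω′ ∈ Ω the set H̄(ω,ω′) := ⋃{H ∈ 𝒯 : ω|_H = ω′|_H} itself belongs to {H ∈ 𝒯 : ω|_H = ω′|_H}. Then 𝒯_Ω := {H̄(ω,ω′) : ω, ω′ ∈ Ω} is a finite chain {H̄_1 ⊆ ⋯ ⊆ H̄_k} in 𝒯, and for every multifunction α: N_𝒯(α) = N_{𝒯_Ω}(α), and the ⊑-greatest element of N_𝒯(α) exists and equals the superposition Γ_{H̄_1}(Γ_{H̄_2}(⋯ Γ_{H̄_k}(α) ⋯)). -/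

import Mathlib

open Set

/-- Restriction of a set `F` of functions (elements of `Z`) to the set `A ⊆ T`:
`F|_A = {f|_A : f ∈ F}`. -/
def resSet {T X : Type*} {Z : Set (T → X)} (A : Set T) (F : Set ↥Z) : Set (↥A → X) :=
  (fun h : ↥Z => A.restrict (h : T → X)) '' F

/-- A multifunction `z : Ω → 𝒫(Z)` is `A`-non-anticipative if `ω|_A = ω'|_A` implies
`z(ω)|_A = z(ω')|_A`. -/
def NonAnt {T X Y : Type*} (Ω : Set (T → Y)) (Z : Set (T → X)) (A : Set T)
    (z : ↥Ω → Set ↥Z) : Prop :=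
  ∀ ω ω' : ↥Ω, A.restrict (ω : T → Y) = A.restrict (ω' : T → Y) →
    resSet A (z ω) = resSet A (z ω')

/-- `N_ℋ(α)`: the set of `ℋ`-non-anticipative multiselectors of `α`. -/
def Nna {T X Y : Type*} (Ω : Set (T → Y)) (Z : Set (T → X)) (ℋ : Set (Set T))
    (α : ↥Ω → Set ↥Z) : Set (↥Ω → Set ↥Z) :=
  {z | (∀ A ∈ ℋ, NonAnt Ω Z A z) ∧ ∀ ω, z ω ⊆ α ω}

/-- `N°_ℋ(α)`: the set of nonempty-valued `ℋ`-non-anticipative multiselectors of `α`. -/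
def NnaNE {T X Y : Type*} (Ω : Set (T → Y)) (Z : Set (T → X)) (ℋ : Set (Set T))
    (α : ↥Ω → Set ↥Z) : Set (↥Ω → Set ↥Z) :=
  {z ∈ Nna Ω Z ℋ α | ∀ ω, (z ω).Nonempty}

/-- The operator `Γ_A`:
`Γ_A(α)(ω) = {h ∈ α(ω) : h|_A ∈ ⋂_{ω' ∈ Ω, ω'|_A = ω|_A} α(ω')|_A}`. -/
def Gamma {T X Y : Type*} (Ω : Set (T → Y)) (Z : Set (T → X)) (A : Set T)
    (α : ↥Ω → Set ↥Z) : ↥Ω → Set ↥Z :=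
  fun ω => {h ∈ α ω |
    A.restrict (h : T → X) ∈
      ⋂ ω' ∈ {η : ↥Ω | A.restrict (η : T → Y) = A.restrict (ω : T → Y)}, resSet A (α ω')}


-- restriction of restriction lemma for functions
lemma restrict_mono' {T X : Type*} {A B : Set T} (hAB : A ⊆ B) {f g : T → X}
    (h : B.restrict f = B.restrict g) : A.restrict f = A.restrict g := by
  funext a
  exact congrFun h ⟨a.1, hAB a.2⟩

lemma resSet_eq_image {T X : Type*} {Z : Set (T → X)} {A B : Set T} (hAB : A ⊆ B)
    (F : Set ↥Z) :
    resSet A F = (fun g : ↥B → X => fun a : ↥A => g ⟨a.1, hAB a.2⟩) '' resSet B F := by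
  unfold resSet
  rw [Set.image_image]
  rfl

lemma resSet_mono_eq {T X : Type*} {Z : Set (T → X)} {A B : Set T} (hAB : A ⊆ B)
    {F G : Set ↥Z} (h : resSet B F = resSet B G) : resSet A F = resSet A G := by
  rw [resSet_eq_image hAB F, resSet_eq_image hAB G, h]

-- Γ shrinks
lemma Gamma_le {T X Y : Type*} (Ω : Set (T → Y)) (Z : Set (T → X)) (A : Set T)
    (β : ↥Ω → Set ↥Z) (ω : ↥Ω) : Gamma Ω Z A β ω ⊆ β ω := fun _ h => h.1

-- restriction of Γ_A β equals the big intersection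
lemma resSet_Gamma {T X Y : Type*} (Ω : Set (T → Y)) (Z : Set (T → X)) (A : Set T)
    (β : ↥Ω → Set ↥Z) (ω : ↥Ω) :
    resSet A (Gamma Ω Z A β ω) =
      ⋂ ω' ∈ {η : ↥Ω | A.restrict (η : T → Y) = A.restrict (ω : T → Y)},
        resSet A (β ω') := by
  apply Set.Subset.antisymm
  · rintro g ⟨h, ⟨_, hS⟩, rfl⟩
    exact hS
  · intro g hg
    have hω : ω ∈ {η : ↥Ω | A.restrict (η : T → Y) = A.restrict (ω : T → Y)} := rfl
    have hgω : g ∈ resSet A (β ω) := by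
      exact Set.mem_iInter₂.mp hg ω hω
    obtain ⟨h, hh, rfl⟩ := hgω
    exact ⟨h, ⟨hh, hg⟩, rfl⟩

-- Γ_A β is A-non-anticipative
lemma nonAnt_Gamma {T X Y : Type*} (Ω : Set (T → Y)) (Z : Set (T → X)) (A : Set T)
    (β : ↥Ω → Set ↥Z) : NonAnt Ω Z A (Gamma Ω Z A β) := by
  intro ω ω' hωω'
  rw [resSet_Gamma, resSet_Gamma]
  have : {η : ↥Ω | A.restrict (η : T → Y) = A.restrict (ω : T → Y)} =
      {η : ↥Ω | A.restrict (η : T → Y) = A.restrict (ω' : T → Y)} := by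
    ext η; simp only [Set.mem_setOf_eq, hωω']
  rw [this]

-- Γ_A preserves B-non-anticipativity when A ⊆ B
lemma nonAnt_Gamma_preserve {T X Y : Type*} (Ω : Set (T → Y)) (Z : Set (T → X))
    {A B : Set T} (hAB : A ⊆ B) (β : ↥Ω → Set ↥Z) (hβ : NonAnt Ω Z B β) :
    NonAnt Ω Z B (Gamma Ω Z A β) := by
  have key : ∀ ω ω' : ↥Ω, B.restrict (ω : T → Y) = B.restrict (ω' : T → Y) →
      resSet B (Gamma Ω Z A β ω) ⊆ resSet B (Gamma Ω Z A β ω') := by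
    intro ω ω' hB
    have hA : A.restrict (ω : T → Y) = A.restrict (ω' : T → Y) := restrict_mono' hAB hB
    have hSet : {η : ↥Ω | A.restrict (η : T → Y) = A.restrict (ω : T → Y)} =
        {η : ↥Ω | A.restrict (η : T → Y) = A.restrict (ω' : T → Y)} := by
      ext η; simp only [Set.mem_setOf_eq, hA]
    rintro g ⟨h, ⟨hhβ, hhS⟩, rfl⟩
    have : (B.restrict (h : T → X)) ∈ resSet B (β ω') := by
      rw [← hβ ω ω' hB]; exact ⟨h, hhβ, rfl⟩
    obtain ⟨h', hh', hres⟩ := this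
    have hAres : A.restrict (h' : T → X) = A.restrict (h : T → X) :=
      restrict_mono' hAB hres
    refine ⟨h', ⟨hh', ?_⟩, hres⟩
    rw [hAres, ← hSet]
    exact hhS
  intro ω ω' hB
  exact Set.Subset.antisymm (key ω ω' hB) (key ω' ω hB.symm)

-- any A-nonanticipative z ⊑ β satisfies z ⊑ Γ_A β
lemma le_Gamma {T X Y : Type*} (Ω : Set (T → Y)) (Z : Set (T → X)) (A : Set T)
    {z β : ↥Ω → Set ↥Z} (hz : NonAnt Ω Z A z) (hle : ∀ ω, z ω ⊆ β ω) (ω : ↥Ω) :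
    z ω ⊆ Gamma Ω Z A β ω := by
  intro h hh
  refine ⟨hle ω hh, ?_⟩
  rw [Set.mem_iInter₂]
  intro η hη
  have : resSet A (z ω) = resSet A (z η) := hz ω η hη.symm
  have hmem : A.restrict (h : T → X) ∈ resSet A (z η) := by
    rw [← this]; exact ⟨h, hh, rfl⟩
  obtain ⟨h', hh', hres⟩ := hmem
  exact ⟨h', hle η hh', hres⟩

lemma foldr_le {T X Y : Type*} (Ω : Set (T → Y)) (Z : Set (T → X))
    (l : List (Set T)) (β : ↥Ω → Set ↥Z) (ω : ↥Ω) :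
    l.foldr (Gamma Ω Z) β ω ⊆ β ω := by
  induction l with
  | nil => exact fun _ h => h
  | cons A l ih =>
      exact fun h hh => ih (Gamma_le Ω Z A _ ω hh)

lemma foldr_nonAnt {T X Y : Type*} (Ω : Set (T → Y)) (Z : Set (T → X))
    (l : List (Set T)) (hl : l.Pairwise (· ⊆ ·)) (β : ↥Ω → Set ↥Z) :
    ∀ A ∈ l, NonAnt Ω Z A (l.foldr (Gamma Ω Z) β) := by
  induction l with
  | nil => intro A hA; cases hA
  | cons B l ih =>
      intro A hA
      rcases List.mem_cons.mp hA with rfl | hA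
      · exact nonAnt_Gamma Ω Z A _
      · have hBA : B ⊆ A := (List.pairwise_cons.mp hl).1 A hA
        exact nonAnt_Gamma_preserve Ω Z hBA _ (ih (List.pairwise_cons.mp hl).2 A hA)

lemma le_foldr {T X Y : Type*} (Ω : Set (T → Y)) (Z : Set (T → X))
    (l : List (Set T)) {z β : ↥Ω → Set ↥Z}
    (hz : ∀ A ∈ l, NonAnt Ω Z A z) (hle : ∀ ω, z ω ⊆ β ω) :
    ∀ ω, z ω ⊆ l.foldr (Gamma Ω Z) β ω := by
  induction l with
  | nil => exact hle
  | cons A l ih =>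
      have h1 : ∀ ω, z ω ⊆ l.foldr (Gamma Ω Z) β ω :=
        ih (fun B hB => hz B (List.mem_cons_of_mem _ hB))
      exact le_Gamma Ω Z A (hz A List.mem_cons_self) h1

-- sorting a finite chain
lemma chain_sorted {T : Type*} [DecidableEq (Set T)] (s : Finset (Set T))
    (hc : IsChain (· ⊆ ·) (↑s : Set (Set T))) :
    ∃ l : List (Set T), l.toFinset = s ∧ l.Pairwise (· ⊆ ·) := by
  induction s using Finset.strongInduction with
  | _ s ih =>
    rcases s.eq_empty_or_nonempty with rfl | hne
    · exact ⟨[], by simp, List.Pairwise.nil⟩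
    · obtain ⟨m, hm, hmin⟩ := s.exists_minimal hne
      have hleast : ∀ x ∈ s, m ⊆ x := by
        intro x hx
        by_cases hxm : x = m
        · exact hxm ▸ Set.Subset.rfl
        · rcases hc hx hm hxm with h | h
          · by_contra hmx
            exact hmx (hmin hx h)
          · exact h
      have hsub : s.erase m ⊂ s := Finset.erase_ssubset hm
      obtain ⟨l, hl, hls⟩ := ih (s.erase m) hsub
        (hc.mono (by intro x hx; exact Finset.mem_of_mem_erase (by exact_mod_cast hx)))
      refine ⟨m :: l, ?_, ?_⟩
      · simp only [List.toFinset_cons, hl]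
        exact Finset.insert_erase hm
      · refine List.pairwise_cons.mpr ⟨?_, hls⟩
        intro b hb
        have : b ∈ s.erase m := by rw [← hl]; exact List.mem_toFinset.mpr hb
        exact hleast b (Finset.mem_of_mem_erase this)

/-- Corollary `3netrudno`: Let `𝒯` be a chain of nonempty subsets of `T`, let
`Ω` be finite, and suppose each `H̄(ω,ω') = ⋃{H ∈ 𝒯 : ω|_H = ω'|_H}` itself belongs to
`{H ∈ 𝒯 : ω|_H = ω'|_H}`. Then `𝒯_Ω = {H̄(ω,ω') : ω, ω' ∈ Ω}` is a finite chain
`{H̄ 0 ⊆ ⋯ ⊆ H̄ (k-1)}` in `𝒯`, `N_𝒯(α) = N_{𝒯_Ω}(α)`, and the superposition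
`Γ_{H̄ 0}(⋯ Γ_{H̄ (k-1)}(α) ⋯)` is the `⊑`-greatest element of `N_𝒯(α)`. -/
theorem stmt12 {T X Y : Type*} [Nonempty T] [Nonempty X] [Nonempty Y]
    (Ω : Set (T → Y)) (Z : Set (T → X)) (hΩ : Ω.Nonempty) (hZ : Z.Nonempty)
    (hΩfin : Ω.Finite)
    (𝒯 : Set (Set T)) (h𝒯mem : ∀ A ∈ 𝒯, A.Nonempty) (h𝒯chain : IsChain (· ⊆ ·) 𝒯)
    (hstmb : ∀ ω ω' : ↥Ω,
        ⋃₀ {H ∈ 𝒯 | H.restrict (ω : T → Y) = H.restrict (ω' : T → Y)} ∈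
          {H ∈ 𝒯 | H.restrict (ω : T → Y) = H.restrict (ω' : T → Y)})
    (α : ↥Ω → Set ↥Z) :
    ∃ (k : ℕ) (Hbar : Fin k → Set T),
      (∀ i j : Fin k, i ≤ j → Hbar i ⊆ Hbar j) ∧
      Set.range Hbar =
        {S : Set T | ∃ ω ω' : ↥Ω,
          S = ⋃₀ {H ∈ 𝒯 | H.restrict (ω : T → Y) = H.restrict (ω' : T → Y)}} ∧
      Set.range Hbar ⊆ 𝒯 ∧
      Nna Ω Z 𝒯 α = Nna Ω Z (Set.range Hbar) α ∧
      (List.ofFn Hbar).foldr (Gamma Ω Z) α ∈ Nna Ω Z 𝒯 α ∧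
      ∀ β ∈ Nna Ω Z 𝒯 α, ∀ ω : ↥Ω, β ω ⊆ (List.ofFn Hbar).foldr (Gamma Ω Z) α ω := by
  classical
  set Hb : ↥Ω → ↥Ω → Set T := fun ω ω' =>
    ⋃₀ {H ∈ 𝒯 | H.restrict (ω : T → Y) = H.restrict (ω' : T → Y)} with hHb
  set 𝒯Ω : Set (Set T) := {S : Set T | ∃ ω ω' : ↥Ω, S = Hb ω ω'} with h𝒯Ω
  -- 𝒯Ω ⊆ 𝒯 and restriction agreement on Hb
  have hsubT : 𝒯Ω ⊆ 𝒯 := by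
    rintro S ⟨ω, ω', rfl⟩
    exact (hstmb ω ω').1
  have hHbres : ∀ ω ω' : ↥Ω,
      (Hb ω ω').restrict (ω : T → Y) = (Hb ω ω').restrict (ω' : T → Y) :=
    fun ω ω' => (hstmb ω ω').2
  -- 𝒯Ω is finite
  haveI := hΩfin.to_subtype
  have hfin : 𝒯Ω.Finite := by
    have : 𝒯Ω = Set.range (fun p : ↥Ω × ↥Ω => Hb p.1 p.2) := by
      ext S; constructor
      · rintro ⟨ω, ω', rfl⟩; exact ⟨(ω, ω'), rfl⟩
      · rintro ⟨⟨ω, ω'⟩, rfl⟩; exact ⟨ω, ω', rfl⟩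
    rw [this]; exact Set.finite_range _
  set s : Finset (Set T) := hfin.toFinset with hs
  have hsc : (↑s : Set (Set T)) = 𝒯Ω := hfin.coe_toFinset
  have hchain : IsChain (· ⊆ ·) (↑s : Set (Set T)) := by
    rw [hsc]; exact h𝒯chain.mono hsubT
  obtain ⟨l, hl, hls⟩ := chain_sorted s hchain
  refine ⟨l.length, l.get, ?_, ?_, ?_, ?_, ?_, ?_⟩
  -- the pieces
  case _ =>
    intro i j hij
    rcases eq_or_lt_of_le hij with rfl | hlt
    · exact Set.Subset.rfl
    · exact List.pairwise_iff_get.mp hls i j hlt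
  case _ =>
    have : Set.range l.get = {x | x ∈ l} := by
      ext x; simp [List.mem_iff_get, Set.mem_range, eq_comm]
    rw [this]
    have : {x | x ∈ l} = (↑l.toFinset : Set (Set T)) := by ext x; simp
    rw [this, hl, hsc]
  case _ =>
    have hr : Set.range l.get = 𝒯Ω := by
      have h1 : Set.range l.get = {x | x ∈ l} := by
        ext x; simp [List.mem_iff_get, Set.mem_range, eq_comm]
      have h2 : {x | x ∈ l} = (↑l.toFinset : Set (Set T)) := by ext x; simp
      rw [h1, h2, hl, hsc]
    rw [hr]; exact hsubT
  all_goals {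
    have hr : Set.range l.get = 𝒯Ω := by
      have h1 : Set.range l.get = {x | x ∈ l} := by
        ext x; simp [List.mem_iff_get, Set.mem_range, eq_comm]
      have h2 : {x | x ∈ l} = (↑l.toFinset : Set (Set T)) := by ext x; simp
      rw [h1, h2, hl, hsc]
    have hmeml : ∀ A, A ∈ l ↔ A ∈ 𝒯Ω := by
      intro A
      rw [← hr]
      constructor
      · intro hA
        obtain ⟨i, hi⟩ := List.mem_iff_get.mp hA
        exact ⟨i, hi⟩
      · rintro ⟨i, rfl⟩; exact List.get_mem l i
    have hNeq : Nna Ω Z 𝒯 α = Nna Ω Z (Set.range l.get) α := by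
      rw [hr]
      ext z
      constructor
      · rintro ⟨hna, hle⟩
        exact ⟨fun A hA => hna A (hsubT hA), hle⟩
      · rintro ⟨hna, hle⟩
        refine ⟨?_, hle⟩
        intro A hA ω ω' hres
        have hAH : A ⊆ Hb ω ω' := Set.subset_sUnion_of_mem ⟨hA, hres⟩
        have : resSet (Hb ω ω') (z ω) = resSet (Hb ω ω') (z ω') :=
          hna (Hb ω ω') ⟨ω, ω', rfl⟩ ω ω' (hHbres ω ω')
        exact resSet_mono_eq hAH this
    first
    | exact hNeq
    | {
      rw [List.ofFn_get]
      first
      | { rw [hNeq, hr]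
          refine ⟨?_, foldr_le Ω Z l α⟩
          intro A hA
          exact foldr_nonAnt Ω Z l hls α A ((hmeml A).mpr hA) }
      | { rintro β ⟨hβna, hβle⟩ ω
          exact le_foldr Ω Z l
            (fun A hA => hβna A (hsubT ((hmeml A).mp hA))) hβle ω }
    }
  }
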